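/- Let p be a prime and let P be a finitely generated group. Then P is a finite p-group if and only if there exists an integer n ≥ 1 such that γ_n^p P = {1}. -/

import Mathlib

/-! Common definitions following the paper "Residual p properties of mapping class groups
and surface groups" by L. Paris. -/

/-- The commutator `[g,h] = g⁻¹h⁻¹gh`. -/
def commAB {G : Type*} [Group G] (g h : G) : G := g⁻¹ * h⁻¹ * g * h

/-- The commutator subgroup `[K,H]`, generated by all `[g,h]` with `g ∈ K`, `h ∈ H`. -/
def commSub {G : Type*} [Group G] (K H : Subgroup G) : Subgroup G :=
  Subgroup.closure {x | ∃ g ∈ K, ∃ h ∈ H, x = commAB g h}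

/-- The subgroup `[K,H]^p`, generated by all `[g,h]` (`g ∈ K`, `h ∈ H`) together with all
`h^p` (`h ∈ H`). -/
def pComm (p : ℕ) {G : Type*} [Group G] (K H : Subgroup G) : Subgroup G :=
  Subgroup.closure ({x | ∃ g ∈ K, ∃ h ∈ H, x = commAB g h} ∪ {x | ∃ h ∈ H, x = h ^ p})

/-- The lower `𝔽_p`-linear central filtration: `γ_1^p G = G` and
`γ_{n+1}^p G = [G, γ_n^p G]^p` (with the harmless convention `γ_0^p G = G`). -/
def gammaP (p : ℕ) (G : Type*) [Group G] : ℕ → Subgroup G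
  | 0 => ⊤
  | 1 => ⊤
  | n + 2 => pComm p ⊤ (gammaP p G (n + 1))

theorem pComm_top_normal (p : ℕ) {G : Type*} [Group G] {H : Subgroup G} (hH : H.Normal) :
    (pComm p ⊤ H).Normal := by
  constructor
  intro x hx g
  unfold pComm at hx ⊢
  induction hx using Subgroup.closure_induction with
  | mem y hy =>
    apply Subgroup.subset_closure
    rcases hy with ⟨a, -, h, hh, rfl⟩ | ⟨h, hh, rfl⟩
    · exact Or.inl ⟨g * a * g⁻¹, trivial, g * h * g⁻¹, hH.conj_mem h hh g,
        by unfold commAB; group⟩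
    · exact Or.inr ⟨g * h * g⁻¹, hH.conj_mem h hh g, (conj_pow).symm⟩
  | one => simpa using Subgroup.one_mem _
  | mul a b ha hb iha ihb =>
    have e : g * (a * b) * g⁻¹ = (g * a * g⁻¹) * (g * b * g⁻¹) := by group
    rw [e]; exact Subgroup.mul_mem _ iha ihb
  | inv a ha iha =>
    have e : g * a⁻¹ * g⁻¹ = (g * a * g⁻¹)⁻¹ := by group
    rw [e]; exact Subgroup.inv_mem _ iha

instance gammaP_normal (p : ℕ) (G : Type*) [Group G] : ∀ n, (gammaP p G n).Normal
  | 0 => by unfold gammaP; infer_instance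
  | 1 => by unfold gammaP; infer_instance
  | n + 2 => by unfold gammaP; exact pComm_top_normal p (gammaP_normal p G (n + 1))

/-- `G` is residually `p`: every nontrivial element survives in some finite `p`-group
quotient. -/
def IsResiduallyP (p : ℕ) (G : Type*) [Group G] : Prop :=
  ∀ g : G, g ≠ 1 → ∃ (P : Type) (_ : Group P) (_ : Finite P) (φ : G →* P),
    IsPGroup p P ∧ Function.Surjective φ ∧ φ g ≠ 1

/-- `G` is conjugacy `p`-separable. -/
def IsConjPSeparable (p : ℕ) (G : Type*) [Group G] : Prop :=
  ∀ g h : G, IsConj g h ∨ ∃ (P : Type) (_ : Group P) (_ : Finite P) (φ : G →* P),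
    IsPGroup p P ∧ Function.Surjective φ ∧ ¬ IsConj (φ g) (φ h)

/-- Property A: every automorphism of `G` preserving every conjugacy class is inner. -/
def PropertyA (G : Type*) [Group G] : Prop :=
  ∀ α : MulAut G, (∀ g : G, IsConj g (α g)) → α ∈ (MulAut.conj : G →* MulAut G).range

/-- `A_n`: the kernel of the natural homomorphism `Aut(G) → Aut(G/γ_{n+1}^p G)`, i.e. the
automorphisms acting trivially modulo `γ_{n+1}^p G`. -/
def An (p : ℕ) (G : Type*) [Group G] (n : ℕ) : Subgroup (MulAut G) where
  carrier := {α | ∀ g : G, g⁻¹ * α g ∈ gammaP p G (n + 1)}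
  one_mem' := by intro g; simpa using Subgroup.one_mem _
  mul_mem' := by
    intro a b ha hb g
    have e : g⁻¹ * (a * b) g = (g⁻¹ * b g) * ((b g)⁻¹ * a (b g)) := by
      rw [MulAut.mul_apply]; group
    rw [e]; exact Subgroup.mul_mem _ (hb g) (ha (b g))
  inv_mem' := by
    intro a ha g
    have h := ha ((a⁻¹ : MulAut G) g)
    rw [MulAut.apply_inv_self] at h
    have e : g⁻¹ * (a⁻¹ : MulAut G) g = (((a⁻¹ : MulAut G) g)⁻¹ * g)⁻¹ := by group
    rw [e]; exact Subgroup.inv_mem _ h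

theorem mem_An {p : ℕ} {G : Type*} [Group G] {n : ℕ} {α : MulAut G} :
    α ∈ An p G n ↔ ∀ g : G, g⁻¹ * α g ∈ gammaP p G (n + 1) := Iff.rfl

/-- `I_p(G)`: the kernel of the natural homomorphism `Aut(G) → Aut(G/γ_2^p G)`. -/
abbrev Ip (p : ℕ) (G : Type*) [Group G] : Subgroup (MulAut G) := An p G 1

/-- `Inn(G)`, viewed as a subgroup of `I_p(G)`. -/
def InnSub (p : ℕ) (G : Type*) [Group G] : Subgroup (Ip p G) :=
  Subgroup.comap (Ip p G).subtype (MulAut.conj : G →* MulAut G).range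

instance innSub_normal (p : ℕ) (G : Type*) [Group G] : (InnSub p G).Normal := by
  constructor
  rintro n hn g
  obtain ⟨x, hx⟩ := hn
  refine ⟨(g : MulAut G) x, ?_⟩
  have hx' : MulAut.conj x = (n : MulAut G) := hx
  show MulAut.conj ((g : MulAut G) x) = ((g * n * g⁻¹ : Ip p G) : MulAut G)
  ext y
  simp only [Subgroup.coe_mul, Subgroup.coe_inv, MulAut.mul_apply, MulAut.conj_apply, ← hx',
    map_mul, map_inv, MulAut.apply_inv_self]

/-- The surface relator `[x_1,y_1][x_2,y_2]⋯[x_ρ,y_ρ]` in the free group on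
`x_1, …, x_ρ, y_1, …, y_ρ`. -/
def surfaceRel (ρ : ℕ) : FreeGroup (Fin ρ ⊕ Fin ρ) :=
  (List.ofFn fun i : Fin ρ =>
    commAB (FreeGroup.of (Sum.inl i)) (FreeGroup.of (Sum.inr i))).prod

/-- The fundamental group of the closed oriented surface of genus `ρ`, given by the
presentation `⟨x_1, …, x_ρ, y_1, …, y_ρ | [x_1,y_1]⋯[x_ρ,y_ρ] = 1⟩`. -/
abbrev SurfaceGroup (ρ : ℕ) : Type :=
  PresentedGroup ({surfaceRel ρ} : Set (FreeGroup (Fin ρ ⊕ Fin ρ)))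
universe u

section Aux

lemma pComm_le {G : Type*} [Group G] (p : ℕ) {H : Subgroup G} (hH : H.Normal) :
    pComm p ⊤ H ≤ H := by
  apply (Subgroup.closure_le _).mpr
  rintro x (⟨g, -, h, hh, rfl⟩ | ⟨h, hh, rfl⟩)
  · have h1 : g⁻¹ * h⁻¹ * g ∈ H := by
      simpa using hH.conj_mem h⁻¹ (H.inv_mem hh) g⁻¹
    simpa [commAB, mul_assoc] using H.mul_mem h1 hh
  · exact H.pow_mem hh p

lemma gammaP_succ_le (p : ℕ) (G : Type*) [Group G] : ∀ n, gammaP p G (n + 1) ≤ gammaP p G n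
  | 0 => le_rfl
  | n + 1 => by
    show pComm p ⊤ (gammaP p G (n + 1)) ≤ gammaP p G (n + 1)
    exact pComm_le p (gammaP_normal p G (n + 1))

lemma gammaP_antitone (p : ℕ) (G : Type*) [Group G] : Antitone (gammaP p G) :=
  antitone_nat_of_succ_le (gammaP_succ_le p G)

open scoped commutatorElement in
lemma commAB_mem_commutator {G : Type*} [Group G] {H : Subgroup G} (g : G) {h : G}
    (hh : h ∈ H) : commAB g h ∈ ⁅(⊤ : Subgroup G), H⁆ := by
  have : ⁅g⁻¹, h⁻¹⁆ ∈ ⁅(⊤ : Subgroup G), H⁆ :=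
    Subgroup.commutator_mem_commutator (Subgroup.mem_top _) (H.inv_mem hh)
  simpa [commutatorElement_def, commAB, mul_assoc] using this

/-- Key claim: in a finite `p`-group, a normal subgroup with `[G,H]^p = H` is trivial. -/
lemma eq_bot_of_pComm_eq {G : Type*} [Group G] [Finite G] {p : ℕ} (hp : p.Prime)
    (hG : IsPGroup p G) {H : Subgroup G} (hH : H.Normal) (hfix : pComm p ⊤ H = H) :
    H = ⊥ := by
  haveI := hH
  haveI : Fact p.Prime := ⟨hp⟩
  set N : Subgroup G := ⁅(⊤ : Subgroup G), H⁆ with hN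
  haveI : N.Normal := Subgroup.commutator_normal ⊤ H
  set π : G →* G ⧸ N := QuotientGroup.mk' N with hπ
  -- Step A : H ≤ N
  have hcentral : ∀ g : G, ∀ h ∈ H, Commute (π g) (π h) := by
    intro g h hh
    have : (h * g)⁻¹ * (g * h) ∈ N := by
      have := commAB_mem_commutator (H := H) g hh
      simpa [commAB, mul_assoc] using this
    have h1 : π ((h * g)⁻¹ * (g * h)) = 1 := by
      rw [← MonoidHom.mem_ker, hπ, QuotientGroup.ker_mk']; exact this
    rw [map_mul, map_inv, inv_mul_eq_one] at h1
    simpa [Commute, SemiconjBy, map_mul] using h1.symm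
  let T : Subgroup (G ⧸ N) :=
    { carrier := {x | ∃ h ∈ H, x = (π h) ^ p}
      one_mem' := ⟨1, H.one_mem, by simp⟩
      mul_mem' := by
        rintro x y ⟨a, ha, rfl⟩ ⟨b, hb, rfl⟩
        exact ⟨a * b, H.mul_mem ha hb, by rw [map_mul, (hcentral a b hb).mul_pow]⟩
      inv_mem' := by
        rintro x ⟨a, ha, rfl⟩
        exact ⟨a⁻¹, H.inv_mem ha, by rw [map_inv, inv_pow]⟩ }
  have hmapT : ∀ h ∈ H, π h ∈ T := by
    have hle : H.map π ≤ T := by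
      conv_lhs => rw [← hfix]
      rw [pComm, MonoidHom.map_closure]
      apply (Subgroup.closure_le _).mpr
      rintro x ⟨y, (⟨g, -, h, hh, rfl⟩ | ⟨h, hh, rfl⟩), rfl⟩
      · have : π (commAB g h) = 1 := by
          rw [← MonoidHom.mem_ker, hπ, QuotientGroup.ker_mk']
          exact commAB_mem_commutator g hh
        rw [this]; exact T.one_mem
      · exact ⟨h, hh, by rw [map_pow]⟩
    exact fun h hh => hle (Subgroup.mem_map_of_mem π hh)
  obtain ⟨m, hm⟩ := IsPGroup.iff_card.mp (hG.to_quotient N)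
  have hpow : ∀ x ∈ H, ∀ k : ℕ, ∃ y ∈ H, π x = (π y) ^ p ^ k := by
    intro x hx k
    induction k with
    | zero => exact ⟨x, hx, by simp⟩
    | succ k ih =>
      obtain ⟨y, hy, e⟩ := ih
      obtain ⟨z, hz, ez⟩ := hmapT y hy
      exact ⟨z, hz, by rw [e, ez, ← pow_mul, ← pow_succ']⟩
  have hHN : H ≤ N := by
    intro x hx
    obtain ⟨y, hy, e⟩ := hpow x hx m
    have : π x = 1 := by rw [e, ← hm, pow_card_eq_one']
    rwa [← QuotientGroup.ker_mk' N, MonoidHom.mem_ker]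
  -- Step B : H ≤ every term of the lower central series
  have hlcs : ∀ n, H ≤ Subgroup.lowerCentralSeries (⊤ : Subgroup G) n := by
    intro n
    induction n with
    | zero => exact le_top
    | succ n ih =>
      calc H ≤ ⁅(⊤ : Subgroup G), H⁆ := hHN
        _ = ⁅H, (⊤ : Subgroup G)⁆ := Subgroup.commutator_comm _ _
        _ ≤ ⁅Subgroup.lowerCentralSeries (⊤ : Subgroup G) n, (⊤ : Subgroup G)⁆ := Subgroup.commutator_mono ih le_rfl
        _ = Subgroup.lowerCentralSeries (⊤ : Subgroup G) (n + 1) := (Subgroup.lowerCentralSeries_succ ⊤ n).symm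
  obtain ⟨n, hn⟩ := Subgroup.nilpotent_iff_lowerCentralSeries.mp hG.isNilpotent
  exact le_bot_iff.mp (hn ▸ hlcs n)

lemma gammaP_map {G Q : Type*} [Group G] [Group Q] (p : ℕ) (f : G →* Q)
    (hf : Function.Surjective f) : ∀ n, (gammaP p G n).map f = gammaP p Q n
  | 0 => by rw [gammaP, gammaP]; exact Subgroup.map_top_of_surjective f hf
  | 1 => by rw [gammaP, gammaP]; exact Subgroup.map_top_of_surjective f hf
  | n + 2 => by
    have ih := gammaP_map p f hf (n + 1)
    show (pComm p ⊤ (gammaP p G (n + 1))).map f = pComm p ⊤ (gammaP p Q (n + 1))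
    rw [pComm, pComm, MonoidHom.map_closure]
    congr 1
    rw [Set.image_union, ← ih]
    congr 1
    · ext x
      constructor
      · rintro ⟨y, ⟨g, -, h, hh, rfl⟩, rfl⟩
        exact ⟨f g, Subgroup.mem_top _, f h, Subgroup.mem_map_of_mem f hh,
          by simp [commAB, map_mul, map_inv]⟩
      · rintro ⟨g', -, h', ⟨h, hh, rfl⟩, rfl⟩
        obtain ⟨g, rfl⟩ := hf g'
        exact ⟨commAB g h, ⟨g, Subgroup.mem_top _, h, hh, rfl⟩,
          by simp [commAB, map_mul, map_inv]⟩
    · ext x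
      constructor
      · rintro ⟨y, ⟨h, hh, rfl⟩, rfl⟩
        exact ⟨f h, Subgroup.mem_map_of_mem f hh, by rw [map_pow]⟩
      · rintro ⟨h', ⟨h, hh, rfl⟩, rfl⟩
        exact ⟨h ^ p, ⟨h, hh, rfl⟩, by rw [map_pow]⟩

lemma back (p : ℕ) (hp : p.Prime) : ∀ (n : ℕ) (G : Type u) (_ : Group G) (_ : Group.FG G),
    gammaP p G n = ⊥ → Finite G ∧ IsPGroup p G := by
  have htop : ∀ (G : Type u) (_ : Group G), (⊤ : Subgroup G) = ⊥ → Finite G ∧ IsPGroup p G := by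
    intro G _ hbot
    haveI : Subsingleton G := ⟨fun a b => by
      have ha : a ∈ (⊥ : Subgroup G) := hbot ▸ Subgroup.mem_top a
      have hb : b ∈ (⊥ : Subgroup G) := hbot ▸ Subgroup.mem_top b
      rw [Subgroup.mem_bot] at ha hb; rw [ha, hb]⟩
    exact ⟨Finite.of_subsingleton, fun g => ⟨0, Subsingleton.elim _ _⟩⟩
  intro n
  induction n with
  | zero => intro G _ _ hbot; exact htop G _ hbot
  | succ n ih =>
    match n, ih with
    | 0, _ => intro G _ _ hbot; exact htop G _ hbot
    | k + 1, ih =>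
      intro G _ hfg hbot
      set H : Subgroup G := gammaP p G (k + 1) with hHdef
      haveI : H.Normal := gammaP_normal p G (k + 1)
      have hgen : pComm p ⊤ H = ⊥ := hbot
      have hp1 : ∀ h ∈ H, h ^ p = 1 := by
        intro h hh
        have : h ^ p ∈ pComm p ⊤ H := Subgroup.subset_closure (Or.inr ⟨h, hh, rfl⟩)
        rwa [hgen, Subgroup.mem_bot] at this
      have hcomm : ∀ (g : G), ∀ h ∈ H, g * h = h * g := by
        intro g h hh
        have e : commAB g h = 1 := by
          have : commAB g h ∈ pComm p ⊤ H :=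
            Subgroup.subset_closure (Or.inl ⟨g, Subgroup.mem_top _, h, hh, rfl⟩)
          rwa [hgen, Subgroup.mem_bot] at this
        calc g * h = (h * g) * (g⁻¹ * h⁻¹ * g * h) := by group
          _ = h * g := by rw [show g⁻¹ * h⁻¹ * g * h = commAB g h from rfl, e, mul_one]
      -- quotient
      have hQbot : gammaP p (G ⧸ H) (k + 1) = ⊥ := by
        rw [← gammaP_map p (QuotientGroup.mk' H) (QuotientGroup.mk'_surjective H) (k + 1),
          ← hHdef, Subgroup.map_eq_bot_iff, QuotientGroup.ker_mk']
      obtain ⟨hQfin, hQp⟩ := ih (G ⧸ H) _ (QuotientGroup.fg H) hQbot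
      haveI := hQfin
      haveI : H.FiniteIndex := Subgroup.finiteIndex_of_finite_quotient
      haveI : Group.FG H := H.fg_of_index_ne_zero
      letI : CommGroup H :=
        { (inferInstance : Group H) with
          mul_comm := fun a b => Subtype.ext (hcomm a.1 b.1 b.2) }
      have hHfin : Finite H := CommGroup.finite_of_fg_torsion H (fun x => by
        refine isOfFinOrder_iff_pow_eq_one.mpr ⟨p, hp.pos, ?_⟩
        exact Subtype.ext (by simpa using hp1 x.1 x.2))
      have hHp : IsPGroup p H := fun x =>
        ⟨1, by rw [pow_one]; exact Subtype.ext (by simpa using hp1 x.1 x.2)⟩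
      haveI := hHfin
      have hGfin : Finite G :=
        Finite.of_equiv _ (Subgroup.groupEquivQuotientProdSubgroup (s := H)).symm
      refine ⟨hGfin, fun g => ?_⟩
      obtain ⟨k1, hk1⟩ := hQp ((QuotientGroup.mk' H) g)
      have hmem : g ^ p ^ k1 ∈ H := by
        rw [← QuotientGroup.eq_one_iff]
        rw [← map_pow] at hk1
        exact hk1
      obtain ⟨k2, hk2⟩ := hHp ⟨g ^ p ^ k1, hmem⟩
      refine ⟨k1 + k2, ?_⟩
      have : (g ^ p ^ k1) ^ p ^ k2 = 1 := by
        have := congrArg (Subtype.val) hk2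
        simpa using this
      rw [pow_add, pow_mul]
      exact this

end Aux

/-- **Lemma 2.2.** A finitely generated group `P` is a finite `p`-group if and only if
`γ_n^p P = {1}` for some `n ≥ 1`. -/
theorem finite_pGroup_iff_gammaP_eq_bot (p : ℕ) (hp : p.Prime) (P : Type*) [Group P]
    (hfg : Group.FG P) :
    (Finite P ∧ IsPGroup p P) ↔ ∃ n : ℕ, 1 ≤ n ∧ gammaP p P n = ⊥ := by
  constructor
  · rintro ⟨hfin, hpg⟩
    haveI := hfin
    haveI : Finite (Subgroup P) :=
      Finite.of_injective (fun H : Subgroup P => (H : Set P)) SetLike.coe_injective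
    obtain ⟨a, b, hab, he⟩ :=
      Finite.exists_ne_map_eq_of_infinite (fun k : ℕ => gammaP p P (k + 1))
    have key : ∀ m n : ℕ, m < n → gammaP p P (m + 1) = gammaP p P (n + 1) →
        ∃ n : ℕ, 1 ≤ n ∧ gammaP p P n = ⊥ := by
      intro m n hmn heq
      have h1 : gammaP p P (m + 2) = gammaP p P (m + 1) := by
        apply le_antisymm (gammaP_succ_le p P (m + 1))
        calc gammaP p P (m + 1) = gammaP p P (n + 1) := heq
          _ ≤ gammaP p P (m + 2) := gammaP_antitone p P (by omega)
      have h2 : pComm p ⊤ (gammaP p P (m + 1)) = gammaP p P (m + 1) := h1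
      exact ⟨m + 1, by omega,
        eq_bot_of_pComm_eq hp hpg (gammaP_normal p P (m + 1)) h2⟩
    rcases lt_or_gt_of_ne hab with h | h
    · exact key a b h he
    · exact key b a h he.symm
  · rintro ⟨n, -, hbot⟩
    exact back p hp n P _ hfg hbot
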